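/- Let η : ℝ → ℝ be an odd function, and define F on the open unit disc D = {w ∈ ℂ : |w| < 1} by F(0) = 0 and F(w) = η(artanh|w|)·w/|w| for w ≠ 0, where artanh is the inverse hyperbolic tangent. Then F is complex differentiable at every point of D if and only if there exists c ∈ ℝ such that η(x) = c·tanh(x) for all x ∈ ℝ. -/

import Mathlib

/-- The inverse hyperbolic tangent (not available in Mathlib). -/
noncomputable def Real.artanh' (x : ℝ) : ℝ := Real.log ((1 + x) / (1 - x)) / 2

lemma tanh_formula (x : ℝ) :
    Real.tanh x = (Real.exp (2*x) - 1) / (Real.exp (2*x) + 1) := by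
  have h1 : Real.exp (2*x) = Real.exp x * Real.exp x := by rw [two_mul, Real.exp_add]
  have h3 : Real.exp x ≠ 0 := (Real.exp_pos x).ne'
  have h4 : Real.exp x + Real.exp (-x) ≠ 0 := by positivity
  have h5 : Real.exp x * Real.exp x + 1 ≠ 0 := by positivity
  rw [Real.tanh_eq_sinh_div_cosh, Real.sinh_eq, Real.cosh_eq, h1, Real.exp_neg]
  field_simp

lemma artanh_tanh (x : ℝ) : Real.artanh' (Real.tanh x) = x := by
  have he : (0:ℝ) < Real.exp (2*x) + 1 := by positivity
  have h1 : 1 + Real.tanh x = 2*Real.exp (2*x)/(Real.exp (2*x)+1) := by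
    rw [tanh_formula]; field_simp; ring
  have h2 : 1 - Real.tanh x = 2/(Real.exp (2*x)+1) := by
    rw [tanh_formula]; field_simp; ring
  have h3 : (2*Real.exp (2*x)/(Real.exp (2*x)+1))/(2/(Real.exp (2*x)+1))
      = Real.exp (2*x) := by field_simp
  rw [Real.artanh', h1, h2, h3, Real.log_exp]; ring

lemma tanh_artanh {t : ℝ} (h0 : 0 < t) (h1 : t < 1) :
    Real.tanh (Real.artanh' t) = t := by
  have hne : (1:ℝ) - t ≠ 0 := by linarith
  have hr : Real.exp (2 * Real.artanh' t) = (1+t)/(1-t) := by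
    rw [Real.artanh', show 2 * (Real.log ((1+t)/(1-t))/2) = Real.log ((1+t)/(1-t)) by ring]
    exact Real.exp_log (div_pos (by linarith) (by linarith))
  rw [tanh_formula, hr]
  field_simp
  ring

lemma tanh_bounds {x : ℝ} (hx : 0 < x) : 0 < Real.tanh x ∧ Real.tanh x < 1 := by
  have he : (1:ℝ) < Real.exp (2*x) := by
    have := Real.exp_lt_exp.2 (show (0:ℝ) < 2*x by linarith)
    rwa [Real.exp_zero] at this
  rw [tanh_formula]
  constructor
  · exact div_pos (by linarith) (by linarith)
  · rw [div_lt_one (by linarith)]; linarith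

lemma star_pathConnected {s : Set ℂ} {x : ℂ} (h : StarConvex ℝ x s) (hx : x ∈ s) :
    IsPathConnected s := by
  refine ⟨x, hx, ?_⟩
  intro y hy
  exact JoinedIn.of_segment_subset (h.segment_subset hy)

lemma puncturedBall_preconnected : IsPreconnected (Metric.ball (0:ℂ) 1 \ {0}) := by
  set x₀ : ℂ := ((1/2 : ℝ) : ℂ) with hx₀
  set A : Set ℂ := Metric.ball (0:ℂ) 1 ∩ Complex.slitPlane with hA
  have hx₀A : x₀ ∈ A := by
    constructor
    · rw [Metric.mem_ball, dist_zero_right]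
      simp [hx₀, Complex.norm_real]; norm_num
    · exact Complex.ofReal_mem_slitPlane.2 (by norm_num)
  have hAstar : StarConvex ℝ x₀ A := by
    refine StarConvex.inter ((convex_ball _ _).starConvex hx₀A.1) ?_
    exact Complex.starConvex_ofReal_slitPlane (by norm_num)
  have hApc : IsPathConnected A := star_pathConnected hAstar hx₀A
  have hBpc : IsPathConnected ((fun z : ℂ => -z) '' A) := hApc.image continuous_neg
  have hiI : Complex.I * (1/2 : ℂ) ∈ A ∩ ((fun z : ℂ => -z) '' A) := by
    have hmem : ∀ z : ℂ, z.im ≠ 0 → ‖z‖ < 1 → z ∈ A := by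
      intro z h1 h2
      exact ⟨by rwa [Metric.mem_ball, dist_zero_right], Or.inr h1⟩
    have habs : ‖Complex.I * (1/2 : ℂ)‖ < 1 := by
      simp [map_mul]; norm_num
    refine ⟨hmem _ (by simp) habs, ⟨-(Complex.I * (1/2:ℂ)), hmem _ (by simp) (by simpa using habs), by simp⟩⟩
  have hunion : Metric.ball (0:ℂ) 1 \ {0} = A ∪ ((fun z : ℂ => -z) '' A) := by
    ext z
    simp only [Set.mem_diff, Set.mem_singleton_iff, Set.mem_union, Set.mem_image, hA,
      Set.mem_inter_iff, Complex.mem_slitPlane_iff]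
    constructor
    · rintro ⟨hb, hz⟩
      by_cases him : z.im ≠ 0
      · exact Or.inl ⟨hb, Or.inr him⟩
      · push_neg at him
        rcases lt_or_gt_of_ne (fun h : z.re = 0 => hz (Complex.ext h him)) with h | h
        · refine Or.inr ⟨-z, ⟨?_, Or.inl (by simp [h])⟩, by simp⟩
          rwa [Metric.mem_ball, dist_zero_right, norm_neg, ← dist_zero_right, ← Metric.mem_ball]
        · exact Or.inl ⟨hb, Or.inl h⟩
    · rintro (⟨hb, hs⟩ | ⟨a, ⟨hb, hs⟩, rfl⟩)
      · exact ⟨hb, Complex.slitPlane_ne_zero hs⟩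
      · refine ⟨?_, by simpa using Complex.slitPlane_ne_zero hs⟩
        rwa [Metric.mem_ball, dist_zero_right, norm_neg, ← dist_zero_right, ← Metric.mem_ball]
  rw [hunion]
  exact ((hApc.union hBpc ⟨_, hiI⟩).isConnected).isPreconnected


/-- Let `η : ℝ → ℝ` be odd and let `F` be defined on the open unit disc by `F 0 = 0` and
`F w = η (artanh |w|) · w / |w|` for `w ≠ 0`.  Then `F` is complex differentiable at
every point of the disc iff `η = c · tanh` for some real constant `c`. -/
theorem radial_map_holomorphic_iff_tanh (η : ℝ → ℝ) (hodd : ∀ x : ℝ, η (-x) = -η x)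
    (F : ℂ → ℂ) (hF0 : F 0 = 0)
    (hF : ∀ w : ℂ, w ≠ 0 → ‖w‖ < 1 →
      F w = (η (Real.artanh' (‖w‖)) : ℂ) * w / ((‖w‖ : ℝ) : ℂ)) :
    (∀ w : ℂ, ‖w‖ < 1 → DifferentiableAt ℂ F w) ↔
      ∃ c : ℝ, ∀ x : ℝ, η x = c * Real.tanh x := by
  constructor
  · intro hdiff
    set U : Set ℂ := Metric.ball (0:ℂ) 1 \ {0} with hU
    have hUopen : IsOpen U := Metric.isOpen_ball.sdiff isClosed_singleton
    have hmem : ∀ w ∈ U, ‖w‖ < 1 ∧ w ≠ 0 := by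
      intro w hw
      refine ⟨?_, hw.2⟩
      have := hw.1
      rwa [Metric.mem_ball, dist_zero_right] at this
    have hmem' : ∀ t : ℝ, 0 < t → t < 1 → ((t:ℂ) ∈ U ∧ ‖(t:ℂ)‖ = t) := by
      intro t h0 h1
      have habs : ‖(t:ℂ)‖ = t := by
        rw [Complex.norm_real, Real.norm_eq_abs, abs_of_pos h0]
      refine ⟨⟨?_, ?_⟩, habs⟩
      · rw [Metric.mem_ball, dist_zero_right, habs]; exact h1
      · simp only [Set.mem_singleton_iff]
        exact fun h => h0.ne' (by exact_mod_cast h)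
    have hgval : ∀ w ∈ U, F w / w
        = ((η (Real.artanh' (‖w‖)) / ‖w‖ : ℝ) : ℂ) := by
      intro w hw
      obtain ⟨h1, h2⟩ := hmem w hw
      have habs : ((‖w‖ : ℝ) : ℂ) ≠ 0 := by
        exact_mod_cast (norm_ne_zero_iff.mpr h2)
      rw [hF w h2 h1]
      push_cast
      field_simp
    have hdiffU : DifferentiableOn ℂ (fun w => F w / w) U := by
      intro w hw
      exact ((hdiff w (hmem w hw).1).div differentiableAt_id (hmem w hw).2).differentiableWithinAt
    have han : AnalyticOnNhd ℂ (fun w => F w / w) U := hdiffU.analyticOnNhd hUopen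
    have hhalf := hmem' (1/2) (by norm_num) (by norm_num)
    rcases han.is_constant_or_isOpen puncturedBall_preconnected with ⟨v, hv⟩ | hopen
    · set c : ℝ := η (Real.artanh' (1/2)) / (1/2) with hc
      have key : ∀ t : ℝ, 0 < t → t < 1 → η (Real.artanh' t) = c * t := by
        intro t h0 h1
        obtain ⟨htU, habs⟩ := hmem' t h0 h1
        have e1 : ((η (Real.artanh' t) / t : ℝ) : ℂ) = v := by
          have h := (hgval _ htU).symm.trans (hv _ htU)
          rwa [habs] at h
        have e2 : ((η (Real.artanh' (1/2)) / (1/2) : ℝ) : ℂ) = v := by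
          have h := (hgval _ hhalf.1).symm.trans (hv _ hhalf.1)
          rwa [hhalf.2] at h
        have : (η (Real.artanh' t) / t : ℝ) = η (Real.artanh' (1/2)) / (1/2) := by
          exact_mod_cast e1.trans e2.symm
        rw [hc, ← this, div_mul_cancel₀ _ h0.ne']
      refine ⟨c, fun x => ?_⟩
      rcases lt_trichotomy x 0 with hx | rfl | hx
      · obtain ⟨ht0, ht1⟩ := tanh_bounds (show (0:ℝ) < -x by linarith)
        have := key _ ht0 ht1
        rw [artanh_tanh] at this
        have hx' : η x = -η (-x) := by rw [hodd x]; ring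
        rw [hx', this, Real.tanh_neg]; ring
      · have h0 : η 0 = 0 := by have := hodd 0; simp at this; linarith
        simp [h0, Real.tanh_zero]
      · obtain ⟨ht0, ht1⟩ := tanh_bounds hx
        have := key _ ht0 ht1
        rwa [artanh_tanh] at this
    · exfalso
      have himg : IsOpen ((fun w => F w / w) '' U) := hopen U subset_rfl hUopen
      set z : ℂ := F ((1/2:ℝ):ℂ) / ((1/2:ℝ):ℂ) with hz
      have hzmem : z ∈ (fun w => F w / w) '' U := ⟨_, hhalf.1, rfl⟩
      obtain ⟨ε, hε, hball⟩ := Metric.isOpen_iff.1 himg z hzmem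
      have hpt : z + ((ε/2:ℝ):ℂ) * Complex.I ∈ Metric.ball z ε := by
        rw [Metric.mem_ball, dist_eq_norm]
        simp only [add_sub_cancel_left, norm_mul, Complex.norm_I, mul_one, Complex.norm_real,
          Real.norm_eq_abs]
        rw [abs_of_pos (by linarith)]
        linarith
      obtain ⟨w, hwU, hw0⟩ := hball hpt
      have hw : F w / w = z + ((ε/2:ℝ):ℂ) * Complex.I := hw0
      have him : (F w / w).im = 0 := by rw [hgval w hwU]; exact Complex.ofReal_im _
      have hzim : z.im = 0 := by rw [hz, hgval _ hhalf.1]; exact Complex.ofReal_im _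
      rw [hw] at him
      simp only [Complex.add_im, Complex.mul_im, Complex.I_re, Complex.I_im, Complex.ofReal_re,
        Complex.ofReal_im, mul_zero, mul_one, zero_mul, add_zero, zero_add] at him
      rw [hzim] at him
      simp at him
      linarith
  · rintro ⟨c, hc⟩ w hw
    have heq : Set.EqOn F (fun z => (c:ℂ) * z) (Metric.ball (0:ℂ) 1) := by
      intro z hz
      have hz1 : ‖z‖ < 1 := by
        rwa [Metric.mem_ball, dist_zero_right] at hz
      by_cases h0 : z = 0
      · simp [h0, hF0]
      · have habs0 : 0 < ‖z‖ := norm_pos_iff.mpr h0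
        have habsne : ((‖z‖ : ℝ) : ℂ) ≠ 0 := by exact_mod_cast habs0.ne'
        show F z = (c:ℂ) * z
        rw [hF z h0 hz1, hc, tanh_artanh habs0 hz1]
        push_cast
        field_simp
    have hw' : w ∈ Metric.ball (0:ℂ) 1 := by
      rwa [Metric.mem_ball, dist_zero_right]
    have hev : F =ᶠ[nhds w] fun z => (c:ℂ)*z :=
      heq.eventuallyEq_of_mem (Metric.isOpen_ball.mem_nhds hw')
    exact ((differentiable_id.const_mul ((c:ℂ))) w).congr_of_eventuallyEq hev
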